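/- Let G be bipartite with parts L, R. If a feasible flow f in the network (source s → L with capacities p i, edges L → R with infinite capacity, R → sink t with capacities p j) saturates all source and sink edges, then the assignment u_{ij} = u_{ji} = f(i,j) for edges {i,j} of G, with zero elsewhere and zero diagonal, is a balanced equilibrium: it is symmetric, nonnegative, supported on edges of G, and every vertex's row sum equals its power. -/

import Mathlib

theorem stmt17 {V : Type*} [Fintype V] [DecidableEq V] (G : SimpleGraph V)
    (L R : Finset V) (hdisj : Disjoint L R) (hcover : ∀ x, x ∈ L ∨ x ∈ R)
    (hbip : ∀ i j, G.Adj i j → (i ∈ L ∧ j ∈ R) ∨ (i ∈ R ∧ j ∈ L))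
    (p : V → ℝ)
    (fs : V → ℝ) (f : V → V → ℝ) (ft : V → ℝ)
    (hfs : ∀ i, 0 ≤ fs i) (hf : ∀ i j, 0 ≤ f i j) (hft : ∀ j, 0 ≤ ft j)
    (hcaps : ∀ i, fs i ≤ p i) (hcapt : ∀ j, ft j ≤ p j)
    (hsupp : ∀ i j, ¬ (i ∈ L ∧ j ∈ R ∧ G.Adj i j) → f i j = 0)
    (hconsL : ∀ i ∈ L, fs i = ∑ j, f i j)
    (hconsR : ∀ j ∈ R, ft j = ∑ i, f i j)
    (hsatL : ∀ i ∈ L, fs i = p i) (hsatR : ∀ j ∈ R, ft j = p j) :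
    let U : Matrix V V ℝ := fun x y =>
      if x ∈ L ∧ y ∈ R then f x y else if x ∈ R ∧ y ∈ L then f y x else 0
    U.IsSymm ∧ (∀ a b, 0 ≤ U a b) ∧ (∀ a, U a a = 0) ∧
      (∀ a b, ¬ G.Adj a b → U a b = 0) ∧ ∀ a, ∑ b, U a b = p a := by
  intro U
  have hdis : ∀ x, x ∈ L → x ∈ R → False := fun x hx hy =>
    Finset.disjoint_left.mp hdisj hx hy
  have hU : ∀ a b, U a b = f a b + f b a := by
    intro a b
    by_cases h1 : a ∈ L ∧ b ∈ R
    · have : f b a = 0 := hsupp b a (fun h => hdis b h.1 h1.2)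
      simp [U, h1, this]
    · by_cases h2 : a ∈ R ∧ b ∈ L
      · have : f a b = 0 := hsupp a b (fun h => hdis a h.1 h2.1)
        simp [U, h1, h2, this]
      · have e1 : f a b = 0 := hsupp a b (fun h => h1 ⟨h.1, h.2.1⟩)
        have e2 : f b a = 0 := hsupp b a (fun h => h2 ⟨h.2.1, h.1⟩)
        simp [U, h1, h2, e1, e2]
  refine ⟨?_, ?_, ?_, ?_, ?_⟩
  · ext a b
    simp only [Matrix.transpose_apply, hU]
    ring
  · intro a b
    rw [hU]
    exact add_nonneg (hf a b) (hf b a)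
  · intro a
    rw [hU]
    have : f a a = 0 := hsupp a a (fun h => hdis a h.1 h.2.1)
    simp [this]
  · intro a b hadj
    rw [hU]
    have e1 : f a b = 0 := hsupp a b (fun h => hadj h.2.2)
    have e2 : f b a = 0 := hsupp b a (fun h => hadj (G.adj_symm h.2.2))
    simp [e1, e2]
  · intro a
    simp only [hU, Finset.sum_add_distrib]
    rcases hcover a with ha | ha
    · have h2 : ∀ b, f b a = 0 := fun b => hsupp b a (fun h => hdis a ha h.2.1)
      simp only [h2, Finset.sum_const_zero, add_zero]
      rw [← hconsL a ha, hsatL a ha]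
    · have h2 : ∀ b, f a b = 0 := fun b => hsupp a b (fun h => hdis a h.1 ha)
      simp only [h2, Finset.sum_const_zero, zero_add]
      rw [← hconsR a ha, hsatR a ha]
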